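/- Static hopset stretch/hopbound lemma: let G = (V, E, w) be a weighted undirected graph, k ≥ 1, 0 < δ ≤ 1/(8k), and let V = A₀ ⊇ A₁ ⊇ ... ⊇ A_k = ∅ be nested vertex sets. For u ∈ A_i \ A_{i+1} let p(u) be a closest vertex of A_{i+1} to u and B(u) = { v ∈ A_i : d_G(u, v) < d_G(u, A_{i+1}) }; let H contain the edge (u, v) with weight d_G(u, v) for every such u and every v ∈ B(u) ∪ {p(u)}. Then for every pair x, y ∈ V and every 0 ≤ i ≤ k − 1, either (1) d_{G ∪ H}^{((3/δ)^i)}(x, y) ≤ (1 + 8δi)·d_G(x, y), or (2) there exists z ∈ A_{i+1} with d_{G ∪ H}^{((3/δ)^i)}(x, z) ≤ 2·d_G(x, y). Consequently, since A_k = ∅, taking i = k − 1 gives d_{G ∪ H}^{((3/δ)^{k−1})}(x, y) ≤ (1 + 8δ(k−1))·d_G(x, y) for all pairs x, y. -/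

import Mathlib

open scoped ENNReal BigOperators Classical
set_option linter.unusedSectionVars false

noncomputable def hdist {V : Type*} [Fintype V] [DecidableEq V]
    (w : V → V → ℝ≥0∞) : ℕ → V → V → ℝ≥0∞
  | 0, u, v => if u = v then 0 else ⊤
  | h + 1, u, v => min (hdist w h u v) (⨅ x, w u x + hdist w h x v)

noncomputable def gdist {V : Type*} [Fintype V] [DecidableEq V]
    (w : V → V → ℝ≥0∞) (u v : V) : ℝ≥0∞ :=
  ⨅ h : ℕ, hdist w h u v

section basic
variable {V : Type*} [Fintype V] [DecidableEq V] (w : V → V → ℝ≥0∞)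

lemma hdist_zero (u v : V) : hdist w 0 u v = if u = v then 0 else ⊤ := rfl

lemma hdist_succ (h : ℕ) (u v : V) :
    hdist w (h+1) u v = min (hdist w h u v) (⨅ x, w u x + hdist w h x v) := rfl

lemma hdist_anti {h h' : ℕ} (hh : h ≤ h') (u v : V) : hdist w h' u v ≤ hdist w h u v := by
  induction h' with
  | zero => simp_all
  | succ n ih =>
    rcases Nat.lt_or_ge h (n+1) with hlt | hge
    · exact le_trans (min_le_left _ _) (ih (Nat.lt_succ_iff.mp hlt))
    · have : h = n + 1 := le_antisymm hh hge
      subst this; rfl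

lemma hdist_self (h : ℕ) (u : V) : hdist w h u u = 0 := by
  have h0 : hdist w 0 u u = 0 := by simp [hdist_zero]
  exact le_antisymm (le_trans (hdist_anti w (Nat.zero_le h) u u) h0.le) (zero_le)

lemma hdist_one_le (u v : V) : hdist w 1 u v ≤ w u v := by
  refine le_trans (min_le_right _ _) (le_trans (iInf_le _ v) ?_)
  simp [hdist_zero]

lemma hdist_triangle (h1 h2 : ℕ) (u m v : V) :
    hdist w (h1 + h2) u v ≤ hdist w h1 u m + hdist w h2 m v := by
  induction h1 generalizing u with
  | zero =>
    by_cases hum : u = m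
    · subst hum; simp [hdist_zero]
    · simp [hdist_zero, hum]
  | succ n ih =>
    have hrw : n + 1 + h2 = (n + h2) + 1 := by omega
    rw [hrw, hdist_succ, hdist_succ, ← min_add_add_right]
    refine min_le_min (ih u) ?_
    rw [ENNReal.iInf_add]
    refine le_iInf fun x => le_trans (iInf_le _ x) ?_
    rw [add_assoc]
    exact add_le_add_right (ih x) _

lemma gdist_le_hdist (h : ℕ) (u v : V) : gdist w u v ≤ hdist w h u v := iInf_le _ h

lemma gdist_self (u : V) : gdist w u u = 0 :=
  le_antisymm (le_trans (gdist_le_hdist w 0 u u) (by simp [hdist_zero])) (zero_le)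

lemma gdist_le_w (u v : V) : gdist w u v ≤ w u v :=
  le_trans (gdist_le_hdist w 1 u v) (hdist_one_le w u v)

lemma gdist_triangle (u m v : V) : gdist w u v ≤ gdist w u m + gdist w m v := by
  rw [show gdist w u m = ⨅ h : ℕ, hdist w h u m from rfl, ENNReal.iInf_add]
  refine le_iInf fun h1 => ?_
  rw [show gdist w m v = ⨅ h : ℕ, hdist w h m v from rfl, ENNReal.add_iInf]
  refine le_iInf fun h2 => ?_
  exact le_trans (gdist_le_hdist w (h1 + h2) u v) (hdist_triangle w h1 h2 u m v)

omit [Fintype V] [DecidableEq V] in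
lemma iInf_min_eq {f g : V → ℝ≥0∞} :
    (⨅ x, min (f x) (g x)) = min (⨅ x, f x) (⨅ x, g x) := by
  refine le_antisymm (le_min (iInf_mono fun x => min_le_left _ _)
    (iInf_mono fun x => min_le_right _ _)) (le_iInf fun x => min_le_min (iInf_le _ x) (iInf_le _ x))

lemma hdist_succ' (h : ℕ) (u v : V) :
    hdist w (h+1) u v = min (hdist w h u v) (⨅ x, hdist w h u x + w x v) := by
  induction h generalizing u v with
  | zero =>
    have h1 : (⨅ x, w u x + hdist w 0 x v) = w u v := by
      refine le_antisymm (le_trans (iInf_le _ v) (by simp [hdist_zero])) (le_iInf fun x => ?_)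
      by_cases hxv : x = v
      · subst hxv; simp [hdist_zero]
      · simp [hdist_zero, hxv]
    have h2 : (⨅ x, hdist w 0 u x + w x v) = w u v := by
      refine le_antisymm (le_trans (iInf_le _ u) (by simp [hdist_zero])) (le_iInf fun x => ?_)
      by_cases hxu : u = x
      · subst hxu; simp [hdist_zero]
      · simp [hdist_zero, hxu]
    rw [hdist_succ, h1, h2]
  | succ n ih =>
    have hP : hdist w (n+1) u v ≤ ⨅ x, w u x + hdist w n x v := min_le_right _ _
    have hP' : hdist w (n+1) u v ≤ ⨅ y, hdist w n u y + w y v := by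
      rw [ih u v]; exact min_le_right _ _
    have hswap : (⨅ x, ⨅ y, (w u x + hdist w n x y) + w y v)
        = ⨅ y, (⨅ x, w u x + hdist w n x y) + w y v := by
      rw [iInf_comm]
      exact iInf_congr fun y => (ENNReal.iInf_add).symm
    calc hdist w (n+1+1) u v
        = min (hdist w (n+1) u v)
            (⨅ x, min (w u x + hdist w n x v) (⨅ y, (w u x + hdist w n x y) + w y v)) := by
          rw [hdist_succ w (n+1) u v]
          congr 1
          refine iInf_congr fun x => ?_
          rw [ih x v, ← min_add_add_left]
          congr 1
          rw [ENNReal.add_iInf]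
          exact iInf_congr fun y => (add_assoc _ _ _).symm
      _ = min (hdist w (n+1) u v)
            (min (⨅ x, w u x + hdist w n x v) (⨅ x, ⨅ y, (w u x + hdist w n x y) + w y v)) := by
          rw [iInf_min_eq]
      _ = min (hdist w (n+1) u v) (⨅ x, ⨅ y, (w u x + hdist w n x y) + w y v) := by
          rw [← min_assoc, min_eq_left hP]
      _ = min (hdist w (n+1) u v) (⨅ y, (⨅ x, w u x + hdist w n x y) + w y v) := by
          rw [hswap]
      _ = min (hdist w (n+1) u v)
            (min (⨅ y, hdist w n u y + w y v) (⨅ y, (⨅ x, w u x + hdist w n x y) + w y v)) := by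
          rw [← min_assoc, min_eq_left hP']
      _ = min (hdist w (n+1) u v)
            (⨅ y, min (hdist w n u y + w y v) ((⨅ x, w u x + hdist w n x y) + w y v)) := by
          rw [iInf_min_eq]
      _ = min (hdist w (n+1) u v) (⨅ y, hdist w (n+1) u y + w y v) := by
          congr 1
          refine iInf_congr fun y => ?_
          rw [hdist_succ, ← min_add_add_right]

lemma hdist_symm (hsym : ∀ u v, w u v = w v u) (h : ℕ) (u v : V) :
    hdist w h u v = hdist w h v u := by
  induction h generalizing u v with
  | zero => simp [hdist_zero, eq_comm]
  | succ n ih =>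
    rw [hdist_succ, hdist_succ' w n v u]
    congr 1
    · exact ih u v
    · exact iInf_congr fun x => by rw [hsym u x, ih x v, add_comm]

lemma gdist_symm (hsym : ∀ u v, w u v = w v u) (u v : V) :
    gdist w u v = gdist w v u :=
  iInf_congr fun h => hdist_symm w hsym h u v

lemma gdist_le_hdist_of {w' : V → V → ℝ≥0∞} (hw' : ∀ a b, gdist w a b ≤ w' a b) (h : ℕ) :
    ∀ u v : V, gdist w u v ≤ hdist w' h u v := by
  induction h with
  | zero =>
    intro u v
    by_cases huv : u = v
    · subst huv; simp [hdist_zero, gdist_self]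
    · simp [hdist_zero, huv]
  | succ n ih =>
    intro u v
    refine le_min (ih u v) (le_iInf fun x => ?_)
    exact le_trans (gdist_triangle w u x v) (add_le_add (hw' u x) (ih x v))

end basic

section walks
variable {V : Type*} [Fintype V] [DecidableEq V] (w : V → V → ℝ≥0∞)

noncomputable def wcost : V → List V → V → ℝ≥0∞
  | u, [], v => if u = v then 0 else ⊤
  | u, x :: l, v => w u x + wcost x l v

lemma wcost_nil (u v : V) : wcost w u [] v = if u = v then 0 else ⊤ := rfl
lemma wcost_cons (u x v : V) (l : List V) : wcost w u (x :: l) v = w u x + wcost w x l v := rfl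

lemma hdist_le_wcost (v : V) : ∀ (l : List V) (u : V), hdist w l.length u v ≤ wcost w u l v := by
  intro l
  induction l with
  | nil => intro u; exact (hdist_zero w u v).le.trans (wcost_nil w u v).ge
  | cons x t ih =>
    intro u
    rw [List.length_cons, wcost_cons]
    exact le_trans (min_le_right _ _) (le_trans (iInf_le _ x) (add_le_add_right (ih x) _))

lemma exists_wcost_eq (h : ℕ) (u v : V) :
    ∃ l : List V, l.length ≤ h ∧ wcost w u l v = hdist w h u v := by
  induction h generalizing u with
  | zero => exact ⟨[], le_refl _, rfl⟩
  | succ n ih =>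
    rcases le_total (hdist w n u v) (⨅ x, w u x + hdist w n x v) with hle | hle
    · obtain ⟨l, hl, he⟩ := ih u
      exact ⟨l, hl.trans (Nat.le_succ n), by rw [he, hdist_succ, min_eq_left hle]⟩
    · have : Nonempty V := ⟨u⟩
      obtain ⟨x0, hx0⟩ := Finite.exists_min (fun x => w u x + hdist w n x v)
      have hinf : (⨅ x, w u x + hdist w n x v) = w u x0 + hdist w n x0 v :=
        le_antisymm (iInf_le _ x0) (le_iInf hx0)
      obtain ⟨l, hl, he⟩ := ih x0
      refine ⟨x0 :: l, Nat.succ_le_succ hl, ?_⟩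
      rw [wcost_cons, he, hdist_succ, min_eq_right hle, hinf]

lemma wcost_drop (v : V) :
    ∀ (l1 : List V) (x u : V) (l2 : List V), wcost w x l2 v ≤ wcost w u (l1 ++ x :: l2) v := by
  intro l1
  induction l1 with
  | nil => intro x u l2; rw [List.nil_append, wcost_cons]; exact le_add_self
  | cons a t ih =>
    intro x u l2
    rw [List.cons_append, wcost_cons]
    exact le_trans (ih x a l2) le_add_self

lemma exists_wcost_nodup (v : V) :
    ∀ (n : ℕ) (l : List V) (u : V), l.length ≤ n →
      ∃ l' : List V, (∀ a ∈ l', a ∈ l) ∧ (u :: l').Nodup ∧ wcost w u l' v ≤ wcost w u l v := by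
  intro n
  induction n with
  | zero =>
    intro l u hl
    have : l = [] := List.length_eq_zero_iff.mp (Nat.le_zero.mp hl)
    subst this
    exact ⟨[], by simp, List.nodup_singleton u, le_refl _⟩
  | succ n ih =>
    intro l u hl
    by_cases hu : u ∈ l
    · obtain ⟨l1, l2, rfl⟩ := List.append_of_mem hu
      have hlen : l2.length ≤ n := by
        have := (List.length_append : (l1 ++ u :: l2).length = _) ▸ hl
        simp at this; omega
      obtain ⟨l', hsub, hnd, hc⟩ := ih l2 u hlen
      refine ⟨l', fun a ha => ?_, hnd, le_trans hc (wcost_drop w v l1 u u l2)⟩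
      have := hsub a ha
      simp [this]
    · cases l with
      | nil => exact ⟨[], by simp, List.nodup_singleton u, le_refl _⟩
      | cons x t =>
        have hlen : t.length ≤ n := by simp at hl; omega
        obtain ⟨t', hsub, hnd, hc⟩ := ih t x hlen
        refine ⟨x :: t', ?_, ?_, ?_⟩
        · intro a ha
          rcases List.mem_cons.mp ha with rfl | ha
          · exact List.mem_cons_self
          · exact List.mem_cons_of_mem _ (hsub a ha)
        · refine List.nodup_cons.mpr ⟨?_, hnd⟩
          intro hmem
          rcases List.mem_cons.mp hmem with rfl | hmem
          · exact hu List.mem_cons_self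
          · exact hu (List.mem_cons_of_mem _ (hsub u hmem))
        · rw [wcost_cons, wcost_cons]
          exact add_le_add_right hc _

lemma gdist_eq_hdist_card (u v : V) : gdist w u v = hdist w (Fintype.card V) u v := by
  refine le_antisymm (gdist_le_hdist w _ u v) (le_iInf fun h => ?_)
  obtain ⟨l, hl, he⟩ := exists_wcost_eq w h u v
  obtain ⟨l', hsub, hnd, hc⟩ := exists_wcost_nodup w v l.length l u (le_refl _)
  have hlen : l'.length ≤ Fintype.card V := by
    have := List.Nodup.length_le_card hnd
    simp at this; omega
  calc hdist w (Fintype.card V) u v ≤ hdist w l'.length u v := hdist_anti w hlen u v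
    _ ≤ wcost w u l' v := hdist_le_wcost w v l' u
    _ ≤ wcost w u l v := hc
    _ = hdist w h u v := he

lemma wcost_eq_sum (v : V) :
    ∀ (l : List V) (u : V), wcost w u l v ≠ ⊤ →
      (∑ j ∈ Finset.range l.length,
        w ((u :: l).getD j v) ((u :: l).getD (j+1) v)) = wcost w u l v := by
  intro l
  induction l with
  | nil =>
    intro u h
    rw [wcost_nil] at h ⊢
    by_cases huv : u = v
    · simp [huv]
    · simp [huv] at h
  | cons x t ih =>
    intro u h
    rw [wcost_cons] at h
    have hxt : wcost w x t v ≠ ⊤ := fun ht => h (by rw [ht]; simp)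
    rw [List.length_cons, Finset.sum_range_succ', wcost_cons]
    have : ∀ j : ℕ, (u :: x :: t).getD (j+1) v = (x :: t).getD j v := fun j => rfl
    simp only [this]
    rw [ih x hxt]
    simp [add_comm]

lemma wcost_getD_last (v : V) :
    ∀ (l : List V) (u : V), wcost w u l v ≠ ⊤ → (u :: l).getD l.length v = v := by
  intro l
  induction l with
  | nil =>
    intro u h
    rw [wcost_nil] at h
    by_cases huv : u = v
    · simpa [huv]
    · simp [huv] at h
  | cons x t ih =>
    intro u h
    rw [wcost_cons] at h
    have hxt : wcost w x t v ≠ ⊤ := fun ht => h (by rw [ht]; simp)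
    exact ih x hxt

lemma exists_opt_walk (x y : V) (hfin : gdist w x y ≠ ⊤) :
    ∃ n ≤ Fintype.card V, ∃ f : ℕ → V, f 0 = x ∧ f n = y ∧
      (∑ j ∈ Finset.range n, w (f j) (f (j+1))) = gdist w x y := by
  obtain ⟨l, hl, he⟩ := exists_wcost_eq w (Fintype.card V) x y
  rw [← gdist_eq_hdist_card] at he
  have hne : wcost w x l y ≠ ⊤ := by rw [he]; exact hfin
  refine ⟨l.length, hl, fun j => (x :: l).getD j y, rfl, wcost_getD_last w y l x hne, ?_⟩
  rw [wcost_eq_sum w y l x hne, he]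

end walks

section seg
variable {V : Type*} [Fintype V] [DecidableEq V] (w : V → V → ℝ≥0∞)

lemma hdist_le_sum_Ico (f : ℕ → V) {a b : ℕ} (hab : a ≤ b) :
    hdist w (b - a) (f a) (f b) ≤ ∑ j ∈ Finset.Ico a b, w (f j) (f (j+1)) := by
  induction b, hab using Nat.le_induction with
  | base => simp [hdist_self]
  | succ b hab ih =>
    have h1 : b + 1 - a = (b - a) + 1 := by omega
    rw [h1, Finset.sum_Ico_succ_top hab]
    exact le_trans (hdist_triangle w (b - a) 1 (f a) (f b) (f (b+1)))
      (add_le_add ih (hdist_one_le w _ _))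

lemma hdist_chain (g : ℕ → V) (B : ℕ → ℝ≥0∞) (hh : ℕ) :
    ∀ m : ℕ, (∀ j < m, hdist w hh (g j) (g (j+1)) ≤ B j) →
      hdist w (m * hh) (g 0) (g m) ≤ ∑ j ∈ Finset.range m, B j := by
  intro m
  induction m with
  | zero => intro _; simp [hdist_self]
  | succ m ih =>
    intro hB
    rw [Finset.sum_range_succ, Nat.succ_mul]
    exact le_trans (hdist_triangle w (m * hh) hh (g 0) (g m) (g (m+1)))
      (add_le_add (ih fun j hj => hB j (Nat.lt_succ_of_lt hj)) (hB m (Nat.lt_succ_self m)))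

lemma segmentation (e : ℕ → ℝ≥0∞) (L : ℝ≥0∞) (n : ℕ) :
    ∃ J : ℕ, ∃ t : ℕ → ℕ, t 0 = 0 ∧ t J = n ∧ (∀ j, t j < t (j+1)) ∧ (∀ j ≤ J, t j ≤ n) ∧
      (∀ j < J, (∑ m ∈ Finset.Ico (t j) (t (j+1)), e m) ≤ L ∨ t (j+1) = t j + 1) ∧
      (∀ j, j + 1 < J → L < ∑ m ∈ Finset.Ico (t j) (t (j+2)), e m) := by
  classical
  set P : ℕ → ℕ → Prop := fun a b => a < b ∧ (∑ m ∈ Finset.Ico a b, e m) ≤ L with hP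
  set next : ℕ → ℕ := fun a => max (a+1) (Nat.findGreatest (P a) n) with hnext
  have hnext_gt : ∀ a, a < next a := fun a => lt_of_lt_of_le (Nat.lt_succ_self a) (le_max_left _ _)
  have hnext_le : ∀ a, a < n → next a ≤ n := fun a ha =>
    max_le ha (Nat.findGreatest_le n)
  set t : ℕ → ℕ := fun j => next^[j] 0 with ht
  have htsucc : ∀ j, t (j+1) = next (t j) := fun j => Function.iterate_succ_apply' next j 0
  have htmono : ∀ j, t j < t (j+1) := fun j => (htsucc j) ▸ hnext_gt (t j)
  have htmono' : Monotone t := monotone_nat_of_le_succ fun j => (htmono j).le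
  have htge : ∀ j, j ≤ t j := by
    intro j
    induction j with
    | zero => exact Nat.zero_le _
    | succ j ih => exact lt_of_le_of_lt ih (htmono j)
  have hex : ∃ j, n ≤ t j := ⟨n, htge n⟩
  set J := Nat.find hex with hJ
  have hJspec : n ≤ t J := Nat.find_spec hex
  have hJlt : ∀ j < J, t j < n := fun j hj => Nat.lt_of_not_le (Nat.find_min hex hj)
  have htJ : t J = n := by
    rcases Nat.eq_zero_or_pos J with h0 | hpos
    · rw [h0] at hJspec ⊢
      have : t 0 = 0 := rfl
      omega
    · obtain ⟨J', hJ'⟩ := Nat.exists_eq_succ_of_ne_zero (Nat.pos_iff_ne_zero.mp hpos)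
      have hlt : t J' < n := hJlt J' (by omega)
      have := hnext_le (t J') hlt
      rw [hJ'] at hJspec ⊢
      rw [htsucc J'] at hJspec ⊢
      omega
  have htle : ∀ j ≤ J, t j ≤ n := by
    intro j hj
    rcases Nat.lt_or_ge j J with h | h
    · exact (hJlt j h).le
    · have : j = J := le_antisymm hj h
      rw [this, htJ]
  refine ⟨J, t, rfl, htJ, htmono, htle, ?_, ?_⟩
  · intro j hj
    by_cases hone : t (j+1) = t j + 1
    · exact Or.inr hone
    · left
      have hfg : t (j+1) = Nat.findGreatest (P (t j)) n := by
        rw [htsucc j] at hone ⊢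
        rcases max_cases (t j + 1) (Nat.findGreatest (P (t j)) n) with ⟨h1, h2⟩ | ⟨h1, h2⟩
        · exact absurd h1 hone
        · exact h1
      have hne : t (j+1) ≠ 0 := by have := htmono j; omega
      have := Nat.findGreatest_of_ne_zero hfg.symm hne
      exact this.2
  · intro j hj
    have hlt1 : t (j+1) < n := hJlt (j+1) hj
    have hfg_le : Nat.findGreatest (P (t j)) n ≤ t (j+1) := by
      rw [htsucc j]; exact le_max_right _ _
    have hnp : ¬ P (t j) (t (j+1) + 1) :=
      Nat.findGreatest_is_greatest (lt_of_le_of_lt hfg_le (Nat.lt_succ_self _)) hlt1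
    have hlt : L < ∑ m ∈ Finset.Ico (t j) (t (j+1) + 1), e m := by
      rcases lt_or_ge L (∑ m ∈ Finset.Ico (t j) (t (j+1) + 1), e m) with h | h
      · exact h
      · exact absurd ⟨by have := htmono j; omega, h⟩ hnp
    refine lt_of_lt_of_le hlt (Finset.sum_le_sum_of_subset ?_)
    have : t (j+1) + 1 ≤ t (j+2) := htmono (j+1)
    exact Finset.Ico_subset_Ico (le_refl _) this
end seg

lemma hop_bound {δ : ℝ} (hδ0 : 0 < δ) (hδ8 : δ ≤ 1/8) {K : ℕ} (hK : (K:ℝ)*δ < 1) (i : ℕ) :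
    (2*K+6) * ⌈(3/δ)^i⌉₊ ≤ ⌈(3/δ)^(i+1)⌉₊ := by
  have hs : (24:ℝ) ≤ 3/δ := by
    rw [le_div_iff₀ hδ0]; linarith
  have hs0 : (0:ℝ) < 3/δ := by positivity
  have hKs : (K:ℝ) < (3/δ)/3 := by
    have h1 : (K:ℝ) < 1/δ := by
      rw [lt_div_iff₀ hδ0]; linarith
    have h2 : (3/δ)/3 = 1/δ := by field_simp
    linarith
  have key : ((2*K+6 : ℕ):ℝ) * (⌈(3/δ)^i⌉₊ : ℝ) ≤ (3/δ)^(i+1) := by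
    have hceil : (⌈(3/δ)^i⌉₊:ℝ) ≤ (3/δ)^i + 1 := (Nat.ceil_lt_add_one (by positivity)).le
    cases i with
    | zero =>
      simp only [pow_zero, Nat.ceil_one, Nat.cast_one, mul_one, pow_one]
      push_cast
      nlinarith
    | succ m =>
      have hone : (1:ℝ) ≤ 3/δ := by linarith
      have hT : 3/δ ≤ (3/δ)^(m+1) := le_self_pow₀ hone (by omega)
      have hTpos : (0:ℝ) < (3/δ)^(m+1) := by positivity
      have hC : ((2*K+6:ℕ):ℝ) ≤ 2*(3/δ)/3 + 6 := by push_cast; nlinarith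
      have hCpos : (0:ℝ) ≤ ((2*K+6:ℕ):ℝ) := by positivity
      rw [pow_succ]
      calc ((2*K+6 : ℕ):ℝ) * (⌈(3/δ)^(m+1)⌉₊ : ℝ)
          ≤ (2*(3/δ)/3 + 6) * ((3/δ)^(m+1) + 1) := by
            apply mul_le_mul hC (hceil) (by positivity) (by linarith)
        _ ≤ (3/δ)^(m+1) * (3/δ) := by nlinarith [sq_nonneg (3/δ), mul_le_mul_of_nonneg_left hT (by linarith : (0:ℝ) ≤ 3/δ - 24)]
  have : ((2*K+6:ℕ):ℝ) * (⌈(3/δ)^i⌉₊:ℝ) ≤ (⌈(3/δ)^(i+1)⌉₊:ℝ) := key.trans (Nat.le_ceil _)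
  exact_mod_cast this

set_option maxHeartbeats 2000000 in
/-- Static hopset stretch/hopbound lemma for the Thorup–Zwick/Elkin–Neiman hopset built
from bunches and pivots over nested sets `V = A 0 ⊇ A 1 ⊇ ⋯ ⊇ A k = ∅`. -/
theorem stmt_16 {V : Type*} [Fintype V] [DecidableEq V]
    (w : V → V → ℝ≥0∞) (hsym : ∀ u v, w u v = w v u)
    (k : ℕ) (hk : 1 ≤ k) (δ : ℝ) (hδ0 : 0 < δ) (hδ1 : δ ≤ 1 / (8 * k))
    (A : ℕ → Finset V) (hA0 : A 0 = Finset.univ) (hAk : A k = ∅)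
    (hnest : ∀ i, A (i + 1) ⊆ A i)
    (p : ℕ → V → V)
    (hp : ∀ i u, u ∈ A i → u ∉ A (i + 1) → (A (i + 1)).Nonempty →
      p i u ∈ A (i + 1) ∧ ∀ a ∈ A (i + 1), gdist w u (p i u) ≤ gdist w u a)
    (H : V → V → ℝ≥0∞)
    (hH : H = fun u v =>
      if ∃ i < k, u ∈ A i ∧ u ∉ A (i + 1) ∧
          ((v ∈ A i ∧ gdist w u v < ⨅ a ∈ A (i + 1), gdist w u a) ∨
            ((A (i + 1)).Nonempty ∧ v = p i u))
        then gdist w u v else ⊤) :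
    (∀ x y : V, ∀ i < k,
        hdist (fun a b => min (w a b) (min (H a b) (H b a))) ⌈(3 / δ) ^ i⌉₊ x y ≤
          ENNReal.ofReal (1 + 8 * δ * i) * gdist w x y ∨
        ∃ z ∈ A (i + 1),
          hdist (fun a b => min (w a b) (min (H a b) (H b a))) ⌈(3 / δ) ^ i⌉₊ x z ≤
            2 * gdist w x y) ∧
    ∀ x y : V,
      hdist (fun a b => min (w a b) (min (H a b) (H b a))) ⌈(3 / δ) ^ (k - 1)⌉₊ x y ≤
        ENNReal.ofReal (1 + 8 * δ * ((k : ℝ) - 1)) * gdist w x y := by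
  have hk1 : (1:ℝ) ≤ (k:ℝ) := by exact_mod_cast hk
  have hδ8 : δ ≤ 1/8 := by
    have h8k : (8:ℝ) ≤ 8*(k:ℝ) := by linarith
    have : 1/(8*(k:ℝ)) ≤ 1/8 := by
      apply one_div_le_one_div_of_le <;> linarith
    linarith
  have hδk : 8 * δ * (k:ℝ) ≤ 1 := by
    have hkpos : (0:ℝ) < 8*(k:ℝ) := by linarith
    rw [div_eq_mul_inv, one_mul] at hδ1
    calc 8 * δ * (k:ℝ) = δ * (8*(k:ℝ)) := by ring
      _ ≤ (8*(k:ℝ))⁻¹ * (8*(k:ℝ)) := by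
          apply mul_le_mul_of_nonneg_right hδ1 (by linarith)
      _ = 1 := inv_mul_cancel₀ (by linarith)
  set W : V → V → ℝ≥0∞ := fun a b => min (w a b) (min (H a b) (H b a)) with hWdef
  have hWsymm : ∀ a b, W a b = W b a := by
    intro a b
    simp only [hWdef]
    rw [hsym a b, min_comm (H a b) (H b a)]
  have hWlow : ∀ a b, gdist w a b ≤ W a b := by
    intro a b
    refine le_min (gdist_le_w w a b) (le_min ?_ ?_)
    · rw [hH]
      dsimp only
      split
      · exact le_refl _
      · exact le_top
    · rw [hH]
      dsimp only
      split
      · exact le_of_eq (gdist_symm w hsym a b)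
      · exact le_top
  have hgW : ∀ (h : ℕ) (a b : V), gdist w a b ≤ hdist W h a b :=
    fun h => gdist_le_hdist_of w hWlow h
  have hmain : ∀ i, i < k → ∀ x y : V,
      hdist W ⌈(3 / δ) ^ i⌉₊ x y ≤ ENNReal.ofReal (1 + 8 * δ * i) * gdist w x y ∨
      ∃ z ∈ A (i + 1), hdist W ⌈(3 / δ) ^ i⌉₊ x z ≤ 2 * gdist w x y := by
    intro i
    induction i with
    | zero =>
      intro h0k x y
      simp only [pow_zero, Nat.ceil_one, Nat.cast_zero, mul_zero, add_zero,
        ENNReal.ofReal_one, one_mul]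
      by_cases hd : gdist w x y = ⊤
      · left; rw [hd]; exact le_top
      by_cases hx1 : x ∈ A 1
      · right; exact ⟨x, hx1, by rw [hdist_self]; exact zero_le⟩
      have hx0 : x ∈ A 0 := hA0 ▸ Finset.mem_univ x
      rcases lt_or_ge (gdist w x y) (⨅ a ∈ A 1, gdist w x a) with hb | hb
      · left
        have hHxy : H x y = gdist w x y := by
          rw [hH]
          exact if_pos ⟨0, by omega, hx0, hx1, Or.inl ⟨hA0 ▸ Finset.mem_univ y, hb⟩⟩
        calc hdist W 1 x y ≤ W x y := hdist_one_le W x y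
          _ ≤ H x y := le_trans (min_le_right _ _) (min_le_left _ _)
          _ = gdist w x y := hHxy
      · right
        have hne : (A 1).Nonempty := by
          rcases Finset.eq_empty_or_nonempty (A 1) with he | hne
          · exact absurd (top_le_iff.mp (by simpa [he] using hb)) hd
          · exact hne
        obtain ⟨hpz, hpmin⟩ := hp 0 x hx0 hx1 hne
        refine ⟨p 0 x, hpz, ?_⟩
        have h1 : gdist w x (p 0 x) ≤ gdist w x y :=
          le_trans (le_trans (le_iInf₂ fun a ha => hpmin a ha) hb) (le_refl _)
        have hHxp : H x (p 0 x) = gdist w x (p 0 x) := by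
          rw [hH]
          exact if_pos ⟨0, by omega, hx0, hx1, Or.inr ⟨hne, rfl⟩⟩
        calc hdist W 1 x (p 0 x) ≤ W x (p 0 x) := hdist_one_le W _ _
          _ ≤ H x (p 0 x) := le_trans (min_le_right _ _) (min_le_left _ _)
          _ = gdist w x (p 0 x) := hHxp
          _ ≤ gdist w x y := h1
          _ ≤ 2 * gdist w x y := le_mul_of_one_le_left (zero_le) one_le_two
    | succ i IH =>
      intro hik x y
      have hik' : i < k := Nat.lt_of_succ_lt hik
      have IHc := IH hik'
      have hcast1 : ((i+1:ℕ):ℝ) = (i:ℝ) + 1 := by push_cast; ring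
      have hinonneg : (0:ℝ) ≤ (i:ℝ) := Nat.cast_nonneg i
      have hδi1 : 8 * δ * ((i:ℝ)+1) ≤ 1 := by
        have hle : ((i:ℝ)+1) ≤ (k:ℝ) := by exact_mod_cast Nat.le_of_lt hik
        nlinarith
      by_cases hd : gdist w x y = ⊤
      · left
        rw [hd, ENNReal.mul_top (by
          rw [Ne, ENNReal.ofReal_eq_zero, not_le, hcast1]
          nlinarith)]
        exact le_top
      obtain ⟨n, hnN, f, hf0, hfn, hsum⟩ := exists_opt_walk w x y hd
      set e : ℕ → ℝ≥0∞ := fun j => w (f j) (f (j+1)) with hedef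
      have hseg : ∀ a b : ℕ, a ≤ b → b ≤ n →
          (∑ j ∈ Finset.Ico a b, e j) = gdist w (f a) (f b) := by
        intro a b hab hbn
        refine le_antisymm ?_
          (le_trans (gdist_le_hdist w (b-a) _ _) (hdist_le_sum_Ico w f hab))
        by_contra hlt
        push_neg at hlt
        have hsplit : (∑ j ∈ Finset.range n, e j)
            = (∑ j ∈ Finset.Ico 0 a, e j) + (∑ j ∈ Finset.Ico a b, e j)
              + (∑ j ∈ Finset.Ico b n, e j) := by
          rw [Finset.range_eq_Ico, ← Finset.sum_Ico_consecutive e (Nat.zero_le b) hbn,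
            ← Finset.sum_Ico_consecutive e (Nat.zero_le a) hab]
        have htot : (∑ j ∈ Finset.Ico 0 a, e j) + (∑ j ∈ Finset.Ico a b, e j)
            + (∑ j ∈ Finset.Ico b n, e j) ≠ ⊤ := by
          rw [← hsplit, hsum]; exact hd
        have hAne : (∑ j ∈ Finset.Ico 0 a, e j) ≠ ⊤ := fun h => htot (by rw [h, top_add, top_add])
        have hCne : (∑ j ∈ Finset.Ico b n, e j) ≠ ⊤ := fun h => htot (by rw [h, add_top])
        have h1 : gdist w x (f a) ≤ ∑ j ∈ Finset.Ico 0 a, e j := by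
          rw [← hf0]
          exact le_trans (gdist_le_hdist w (a-0) _ _) (hdist_le_sum_Ico w f (Nat.zero_le a))
        have h3 : gdist w (f b) y ≤ ∑ j ∈ Finset.Ico b n, e j := by
          rw [← hfn]
          exact le_trans (gdist_le_hdist w (n-b) _ _) (hdist_le_sum_Ico w f hbn)
        have htri : gdist w x y ≤ gdist w x (f a) + gdist w (f a) (f b) + gdist w (f b) y :=
          le_trans (gdist_triangle w x (f b) y)
            (add_le_add_left (gdist_triangle w x (f a) (f b)) _)
        have hstrict : gdist w x y < gdist w x y := by
          calc gdist w x y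
              ≤ gdist w x (f a) + gdist w (f a) (f b) + gdist w (f b) y := htri
            _ ≤ (∑ j ∈ Finset.Ico 0 a, e j) + gdist w (f a) (f b)
                + (∑ j ∈ Finset.Ico b n, e j) := add_le_add (add_le_add h1 (le_refl _)) h3
            _ < (∑ j ∈ Finset.Ico 0 a, e j) + (∑ j ∈ Finset.Ico a b, e j)
                + (∑ j ∈ Finset.Ico b n, e j) :=
                ENNReal.add_lt_add_right hCne (ENNReal.add_lt_add_left hAne hlt)
            _ = gdist w x y := by rw [← hsplit, hsum]
        exact absurd hstrict (lt_irrefl _)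
      obtain ⟨J, t, ht0, htJ, htlt, htle, hlight, hpair⟩ :=
        segmentation e (ENNReal.ofReal δ * gdist w x y) n
      set L := ENNReal.ofReal δ * gdist w x y with hLdef
      have hLtop : L ≠ ⊤ := ENNReal.mul_ne_top ENNReal.ofReal_ne_top hd
      have htmono : Monotone t := monotone_nat_of_le_succ fun j => (htlt j).le
      set c : ℕ → ℝ≥0∞ := fun j => ∑ m ∈ Finset.Ico (t j) (t (j+1)), e m with hcdef
      have hcsum : ∀ a b : ℕ, a ≤ b →
          (∑ j ∈ Finset.Ico a b, c j) = ∑ m ∈ Finset.Ico (t a) (t b), e m := by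
        intro a b hab
        induction b, hab using Nat.le_induction with
        | base => simp
        | succ b hab ih =>
          rw [Finset.sum_Ico_succ_top hab, ih, hcdef]
          exact Finset.sum_Ico_consecutive e (htmono hab) (htmono (Nat.le_succ b))
      have hcg : ∀ j, j < J → c j = gdist w (f (t j)) (f (t (j+1))) := by
        intro j hj
        rw [hcdef]
        exact hseg (t j) (t (j+1)) (htlt j).le (htle (j+1) hj)
      have hctot : (∑ j ∈ Finset.range J, c j) = gdist w x y := by
        rw [Finset.range_eq_Ico, hcsum 0 J (Nat.zero_le J), ht0, htJ,
          ← Finset.range_eq_Ico, hsum]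
      have hcL : ∀ j, j < J → c j ≤ gdist w x y := by
        intro j hj
        rw [← hctot]
        exact Finset.single_le_sum (fun m _ => zero_le) (Finset.mem_range.mpr hj)
      -- counting
      have hKδ : (((J-1)/2 : ℕ):ℝ) * δ < 1 := by
        set K := (J-1)/2 with hKdef
        by_cases hK0 : K = 0
        · rw [hK0]; simpa using one_pos
        · have hK1 : 1 ≤ K := Nat.one_le_iff_ne_zero.mpr hK0
          have hblock : ∀ s, s < K → L < ∑ m ∈ Finset.Ico (t (2*s)) (t (2*s+2)), e m := by
            intro s hs
            have h2s : 2*s + 1 < J := by omega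
            exact hpair (2*s) h2s
          have hb2 : ∀ m : ℕ,
              (∑ s ∈ Finset.range m, ∑ x ∈ Finset.Ico (t (2*s)) (t (2*s+2)), e x)
                = ∑ x ∈ Finset.Ico (t 0) (t (2*m)), e x := by
            intro m
            induction m with
            | zero => simp
            | succ m ih =>
              rw [Finset.sum_range_succ, ih,
                show 2*(m+1) = 2*m+2 by omega]
              exact Finset.sum_Ico_consecutive e (htmono (by omega)) (htmono (by omega))
          have hsum_le :
              (∑ s ∈ Finset.range K, ∑ x ∈ Finset.Ico (t (2*s)) (t (2*s+2)), e x)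
                ≤ gdist w x y := by
            rw [hb2 K, ht0, ← hsum, Finset.range_eq_Ico]
            exact Finset.sum_le_sum_of_subset
              (Finset.Ico_subset_Ico (le_refl 0) (htle (2*K) (by omega)))
          have hrest_ne :
              (∑ s ∈ Finset.Ico 1 K, ∑ x ∈ Finset.Ico (t (2*s)) (t (2*s+2)), e x) ≠ ⊤ := by
            refine ne_top_of_le_ne_top hd (le_trans ?_ hsum_le)
            exact Finset.sum_le_sum_of_subset (by
              intro a ha
              simp only [Finset.mem_Ico, Finset.mem_range] at ha ⊢
              omega)
          have hIco1K : ((K-1:ℕ):ℝ≥0∞) * L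
              ≤ ∑ s ∈ Finset.Ico 1 K, ∑ x ∈ Finset.Ico (t (2*s)) (t (2*s+2)), e x := by
            have hcard := Finset.card_nsmul_le_sum (Finset.Ico 1 K)
              (fun s => ∑ x ∈ Finset.Ico (t (2*s)) (t (2*s+2)), e x) L
              (fun s hs => (hblock s (Finset.mem_Ico.mp hs).2).le)
            rwa [Nat.card_Ico, nsmul_eq_mul] at hcard
          have hKL : (K:ℝ≥0∞) * L < gdist w x y := by
            have hKsplit : (K:ℝ≥0∞) = 1 + ((K-1:ℕ):ℝ≥0∞) := by
              rw [← Nat.cast_one, ← Nat.cast_add]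
              congr 1
              omega
            calc (K:ℝ≥0∞) * L = L + ((K-1:ℕ):ℝ≥0∞) * L := by rw [hKsplit, add_mul, one_mul]
              _ ≤ L + ∑ s ∈ Finset.Ico 1 K, ∑ x ∈ Finset.Ico (t (2*s)) (t (2*s+2)), e x :=
                  add_le_add_right hIco1K L
              _ < (∑ x ∈ Finset.Ico (t (2*0)) (t (2*0+2)), e x)
                  + ∑ s ∈ Finset.Ico 1 K, ∑ x ∈ Finset.Ico (t (2*s)) (t (2*s+2)), e x :=
                  ENNReal.add_lt_add_right hrest_ne (hblock 0 hK1)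
              _ = ∑ s ∈ Finset.range K, ∑ x ∈ Finset.Ico (t (2*s)) (t (2*s+2)), e x := by
                  rw [Finset.range_eq_Ico,
                    ← Finset.sum_Ico_consecutive _ (Nat.zero_le 1) hK1]
                  congr 1
                  simp
              _ ≤ gdist w x y := hsum_le
          have hd0 : gdist w x y ≠ 0 := by
            intro h0
            rw [h0] at hKL
            exact absurd hKL (by simp)
          have hlt1 : ENNReal.ofReal ((K:ℝ)*δ) * gdist w x y < 1 * gdist w x y := by
            rw [one_mul, ENNReal.ofReal_mul (Nat.cast_nonneg K), ENNReal.ofReal_natCast,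
              mul_assoc]
            exact hKL
          have := (ENNReal.mul_lt_mul_iff_left hd0 hd).mp hlt1
          exact (ENNReal.ofReal_lt_one).mp this
      have hhop := hop_bound hδ0 hδ8 hKδ i
      have h1h : 1 ≤ ⌈(3/δ)^i⌉₊ := Nat.one_le_ceil_iff.mpr (by positivity)
      have hJK : J ≤ 2*((J-1)/2) + 2 := by omega
      have hρ1 : (1:ℝ≥0∞) ≤ ENNReal.ofReal (1 + 8*δ*(i:ℝ)) := by
        rw [ENNReal.one_le_ofReal]
        nlinarith
      -- good segments
      have hGoodHeavy : ∀ j, j < J → t (j+1) = t j + 1 →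
          hdist W ⌈(3/δ)^i⌉₊ (f (t j)) (f (t (j+1)))
            ≤ ENNReal.ofReal (1 + 8*δ*(i:ℝ)) * gdist w (f (t j)) (f (t (j+1))) := by
        intro j hj hone
        have hgd : gdist w (f (t j)) (f (t (j+1))) = w (f (t j)) (f (t (j+1))) := by
          rw [← hcg j hj, hcdef]
          simp only [hone, Nat.Ico_succ_singleton, Finset.sum_singleton, hedef]
        calc hdist W ⌈(3/δ)^i⌉₊ (f (t j)) (f (t (j+1)))
            ≤ hdist W 1 (f (t j)) (f (t (j+1))) := hdist_anti W h1h _ _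
          _ ≤ W (f (t j)) (f (t (j+1))) := hdist_one_le W _ _
          _ ≤ w (f (t j)) (f (t (j+1))) := min_le_left _ _
          _ = gdist w (f (t j)) (f (t (j+1))) := hgd.symm
          _ ≤ ENNReal.ofReal (1 + 8*δ*(i:ℝ)) * gdist w (f (t j)) (f (t (j+1))) :=
              le_mul_of_one_le_left (zero_le) hρ1
      by_cases hall : ∀ j, j < J →
          hdist W ⌈(3/δ)^i⌉₊ (f (t j)) (f (t (j+1)))
            ≤ ENNReal.ofReal (1 + 8*δ*(i:ℝ)) * gdist w (f (t j)) (f (t (j+1)))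
      · left
        have hchain := hdist_chain W (fun j => f (t j))
          (fun j => ENNReal.ofReal (1 + 8*δ*(i:ℝ)) * gdist w (f (t j)) (f (t (j+1))))
          ⌈(3/δ)^i⌉₊ J (fun j hj => hall j hj)
        simp only [ht0, hf0, htJ, hfn] at hchain
        calc hdist W ⌈(3/δ)^(i+1)⌉₊ x y
            ≤ hdist W (J * ⌈(3/δ)^i⌉₊) x y := by
              refine hdist_anti W (le_trans ?_ hhop) x y
              exact Nat.mul_le_mul_right _ (by omega)
          _ ≤ ∑ j ∈ Finset.range J,
                ENNReal.ofReal (1 + 8*δ*(i:ℝ)) * gdist w (f (t j)) (f (t (j+1))) := hchain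
          _ = ENNReal.ofReal (1 + 8*δ*(i:ℝ)) * ∑ j ∈ Finset.range J, c j := by
              rw [Finset.mul_sum]
              exact Finset.sum_congr rfl fun j hj => by
                rw [hcg j (Finset.mem_range.mp hj)]
          _ = ENNReal.ofReal (1 + 8*δ*(i:ℝ)) * gdist w x y := by rw [hctot]
          _ ≤ ENNReal.ofReal (1 + 8*δ*((i+1:ℕ):ℝ)) * gdist w x y := by
              refine mul_le_mul_left (ENNReal.ofReal_le_ofReal ?_) _
              rw [hcast1]
              nlinarith
      · -- some bad segment exists
        set S := (Finset.range J).filter (fun j =>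
          ¬ hdist W ⌈(3/δ)^i⌉₊ (f (t j)) (f (t (j+1)))
            ≤ ENNReal.ofReal (1 + 8*δ*(i:ℝ)) * gdist w (f (t j)) (f (t (j+1)))) with hSdef
        have hSne : S.Nonempty := by
          by_contra hSe
          rw [Finset.not_nonempty_iff_eq_empty] at hSe
          apply hall
          intro j hj
          by_contra hng
          have hjS : j ∈ S := Finset.mem_filter.mpr ⟨Finset.mem_range.mpr hj, hng⟩
          rw [hSe] at hjS
          exact absurd hjS (Finset.notMem_empty j)
        set jm := S.min' hSne with hjmdef
        set jp := S.max' hSne with hjpdef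
        have hjmS : jm ∈ S := S.min'_mem hSne
        have hjpS : jp ∈ S := S.max'_mem hSne
        have hjmJ : jm < J := Finset.mem_range.mp (Finset.mem_filter.mp hjmS).1
        have hjpJ : jp < J := Finset.mem_range.mp (Finset.mem_filter.mp hjpS).1
        have hjmBad := (Finset.mem_filter.mp hjmS).2
        have hjpBad := (Finset.mem_filter.mp hjpS).2
        have hjmjp : jm ≤ jp := Finset.min'_le S jp hjpS
        have hGoodPre : ∀ j, j < jm →
            hdist W ⌈(3/δ)^i⌉₊ (f (t j)) (f (t (j+1)))
              ≤ ENNReal.ofReal (1 + 8*δ*(i:ℝ)) * gdist w (f (t j)) (f (t (j+1))) := by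
          intro j hj
          by_contra hng
          have hjS : j ∈ S :=
            Finset.mem_filter.mpr ⟨Finset.mem_range.mpr (lt_trans hj hjmJ), hng⟩
          exact absurd (Finset.min'_le S j hjS) (not_le.mpr hj)
        have hGoodSuf : ∀ j, jp < j → j < J →
            hdist W ⌈(3/δ)^i⌉₊ (f (t j)) (f (t (j+1)))
              ≤ ENNReal.ofReal (1 + 8*δ*(i:ℝ)) * gdist w (f (t j)) (f (t (j+1))) := by
          intro j hj hjJ
          by_contra hng
          have hjS : j ∈ S := Finset.mem_filter.mpr ⟨Finset.mem_range.mpr hjJ, hng⟩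
          exact absurd (Finset.le_max' S j hjS) (not_le.mpr hj)
        have hBadLight : ∀ j, j < J →
            ¬ (hdist W ⌈(3/δ)^i⌉₊ (f (t j)) (f (t (j+1)))
              ≤ ENNReal.ofReal (1 + 8*δ*(i:ℝ)) * gdist w (f (t j)) (f (t (j+1)))) →
            c j ≤ L := by
          intro j hj hng
          rcases hlight j hj with h | h
          · exact h
          · exact absurd (hGoodHeavy j hj h) hng
        rcases IHc (f (t jm)) (f (t (jm+1))) with hg | ⟨z₁, hz₁A, hz₁⟩
        · exact absurd hg hjmBad
        rcases IHc (f (t (jp+1))) (f (t jp)) with hg | ⟨z₂, hz₂A, hz₂⟩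
        · exfalso
          rw [hdist_symm W hWsymm ⌈(3/δ)^i⌉₊ (f (t (jp+1))) (f (t jp)),
            gdist_symm w hsym (f (t (jp+1))) (f (t jp))] at hg
          exact hjpBad hg
        rw [gdist_symm w hsym (f (t (jp+1))) (f (t jp))] at hz₂
        have hz₁c : hdist W ⌈(3/δ)^i⌉₊ (f (t jm)) z₁ ≤ 2 * L := by
          refine le_trans hz₁ ?_
          rw [← hcg jm hjmJ]
          exact mul_le_mul_right (hBadLight jm hjmJ hjmBad) 2
        have hz₂c : hdist W ⌈(3/δ)^i⌉₊ (f (t (jp+1))) z₂ ≤ 2 * L := by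
          refine le_trans hz₂ ?_
          rw [← hcg jp hjpJ]
          exact mul_le_mul_right (hBadLight jp hjpJ hjpBad) 2
        have hPMS : (∑ j ∈ Finset.range jm, c j) + (∑ j ∈ Finset.Ico jm (jp+1), c j)
            + (∑ j ∈ Finset.Ico (jp+1) J, c j) = gdist w x y := by
          rw [Finset.range_eq_Ico,
            Finset.sum_Ico_consecutive c (Nat.zero_le jm) (by omega : jm ≤ jp+1),
            Finset.sum_Ico_consecutive c (Nat.zero_le (jp+1)) (by omega : jp+1 ≤ J),
            ← Finset.range_eq_Ico, hctot]
        have hT1 : hdist W (jm * ⌈(3/δ)^i⌉₊) x (f (t jm))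
            ≤ ENNReal.ofReal (1 + 8*δ*(i:ℝ)) * ∑ j ∈ Finset.range jm, c j := by
          have hch := hdist_chain W (fun j => f (t j))
            (fun j => ENNReal.ofReal (1 + 8*δ*(i:ℝ)) * c j) ⌈(3/δ)^i⌉₊ jm (fun j hj => by
              show hdist W ⌈(3/δ)^i⌉₊ (f (t j)) (f (t (j+1)))
                ≤ ENNReal.ofReal (1 + 8*δ*(i:ℝ)) * c j
              rw [hcg j (lt_trans hj hjmJ)]
              exact hGoodPre j hj)
          simp only [ht0, hf0] at hch
          rw [Finset.mul_sum]
          exact hch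
        have hT5 : hdist W ((J - (jp+1)) * ⌈(3/δ)^i⌉₊) (f (t (jp+1))) y
            ≤ ENNReal.ofReal (1 + 8*δ*(i:ℝ)) * ∑ j ∈ Finset.Ico (jp+1) J, c j := by
          have hch := hdist_chain W (fun s => f (t (jp+1+s)))
            (fun s => ENNReal.ofReal (1 + 8*δ*(i:ℝ)) * c (jp+1+s)) ⌈(3/δ)^i⌉₊ (J - (jp+1))
            (fun s hs => by
              have hlt : jp+1+s < J := by omega
              have hG := hGoodSuf (jp+1+s) (by omega) hlt
              show hdist W ⌈(3/δ)^i⌉₊ (f (t (jp+1+s))) (f (t (jp+1+(s+1))))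
                ≤ ENNReal.ofReal (1 + 8*δ*(i:ℝ)) * c (jp+1+s)
              rw [hcg (jp+1+s) hlt, show jp+1+(s+1) = (jp+1+s)+1 from by omega]
              exact hG)
          simp only [add_zero, show jp+1+(J-(jp+1)) = J from by omega, htJ, hfn] at hch
          rw [Finset.mul_sum, Finset.sum_Ico_eq_sum_range]
          exact hch
        have hT4 : hdist W ⌈(3/δ)^i⌉₊ z₂ (f (t (jp+1))) ≤ 2*L := by
          rw [hdist_symm W hWsymm]
          exact hz₂c
        have hMid : (∑ j ∈ Finset.Ico jm (jp+1), c j) = gdist w (f (t jm)) (f (t (jp+1))) := by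
          rw [hcsum jm (jp+1) (by omega)]
          exact hseg (t jm) (t (jp+1)) (htmono (by omega)) (htle (jp+1) (by omega))
        have hz1f : gdist w z₁ (f (t jm)) ≤ 2*L := by
          rw [gdist_symm w hsym]
          exact le_trans (hgW ⌈(3/δ)^i⌉₊ (f (t jm)) z₁) hz₁c
        have hfz2 : gdist w (f (t (jp+1))) z₂ ≤ 2*L :=
          le_trans (hgW ⌈(3/δ)^i⌉₊ (f (t (jp+1))) z₂) hz₂c
        have hz12 : gdist w z₁ z₂
            ≤ 2*L + (∑ j ∈ Finset.Ico jm (jp+1), c j) + 2*L :=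
          le_trans (gdist_triangle w z₁ (f (t (jp+1))) z₂)
            (add_le_add (le_trans (gdist_triangle w z₁ (f (t jm)) (f (t (jp+1))))
              (add_le_add hz1f (le_of_eq hMid.symm))) hfz2)
        have hLD : ∀ r : ℝ, 0 ≤ r →
            ENNReal.ofReal r * L = ENNReal.ofReal (r*δ) * gdist w x y := by
          intro r hr
          rw [hLdef, ← mul_assoc, ← ENNReal.ofReal_mul hr]
        have h2Lne : (2:ℝ≥0∞) * L ≠ ⊤ := ENNReal.mul_ne_top (by norm_num) hLtop
        have hMD : (∑ j ∈ Finset.Ico jm (jp+1), c j) ≤ gdist w x y := by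
          rw [← hPMS]
          exact le_trans le_add_self le_self_add
        have hPreD : (∑ j ∈ Finset.range jm, c j) ≤ gdist w x y := by
          rw [← hPMS]
          exact le_trans le_self_add le_self_add
        have hPreMidD : (∑ j ∈ Finset.range jm, c j) + (∑ j ∈ Finset.Ico jm (jp+1), c j)
            ≤ gdist w x y := by
          rw [← hPMS]
          exact le_self_add
        by_cases hz1top : z₁ ∈ A (i+1+1)
        · right
          refine ⟨z₁, hz1top, ?_⟩
          have hhopz : jm * ⌈(3/δ)^i⌉₊ + ⌈(3/δ)^i⌉₊ ≤ ⌈(3/δ)^(i+1)⌉₊ := by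
            refine le_trans ?_ hhop
            calc jm * ⌈(3/δ)^i⌉₊ + ⌈(3/δ)^i⌉₊ = (jm+1) * ⌈(3/δ)^i⌉₊ := by ring
              _ ≤ (2*((J-1)/2)+6) * ⌈(3/δ)^i⌉₊ := Nat.mul_le_mul_right _ (by omega)
          have hroute : hdist W (jm * ⌈(3/δ)^i⌉₊ + ⌈(3/δ)^i⌉₊) x z₁
              ≤ ENNReal.ofReal (1 + 8*δ*(i:ℝ)) * (∑ j ∈ Finset.range jm, c j) + 2*L :=
            le_trans (hdist_triangle W _ _ x (f (t jm)) z₁) (add_le_add hT1 hz₁c)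
          have hwt : ENNReal.ofReal (1 + 8*δ*(i:ℝ)) * (∑ j ∈ Finset.range jm, c j) + 2*L
              ≤ 2 * gdist w x y := by
            calc ENNReal.ofReal (1 + 8*δ*(i:ℝ)) * (∑ j ∈ Finset.range jm, c j) + 2*L
                ≤ ENNReal.ofReal (1 + 8*δ*(i:ℝ)) * gdist w x y
                  + ENNReal.ofReal (2*δ) * gdist w x y := by
                  refine add_le_add (mul_le_mul_right hPreD _) ?_
                  rw [← hLD 2 (by norm_num)]
                  norm_num
              _ = ENNReal.ofReal ((1 + 8*δ*(i:ℝ)) + 2*δ) * gdist w x y := by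
                  rw [← add_mul, ← ENNReal.ofReal_add (by positivity) (by positivity)]
              _ ≤ ENNReal.ofReal 2 * gdist w x y :=
                  mul_le_mul_left (ENNReal.ofReal_le_ofReal (by nlinarith)) _
              _ = 2 * gdist w x y := by norm_num
          exact le_trans (hdist_anti W hhopz x z₁) (le_trans hroute hwt)
        by_cases hB : gdist w z₁ z₂ < ⨅ a ∈ A (i+1+1), gdist w z₁ a
        · left
          have hHz : W z₁ z₂ ≤ gdist w z₁ z₂ := by
            refine le_trans (min_le_right _ _) (le_trans (min_le_left _ _) ?_)
            rw [hH]
            simp only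
            rw [if_pos (⟨i+1, hik, hz₁A, hz1top, Or.inl ⟨hz₂A, hB⟩⟩ :
              ∃ i' < k, z₁ ∈ A i' ∧ z₁ ∉ A (i'+1) ∧
                ((z₂ ∈ A i' ∧ gdist w z₁ z₂ < ⨅ a ∈ A (i'+1), gdist w z₁ a) ∨
                  ((A (i'+1)).Nonempty ∧ z₂ = p i' z₁)))]
          have hT3 : hdist W 1 z₁ z₂
              ≤ 2*L + (∑ j ∈ Finset.Ico jm (jp+1), c j) + 2*L :=
            le_trans (hdist_one_le W z₁ z₂) (le_trans hHz hz12)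
          have hC1 := le_trans (hdist_triangle W (jm * ⌈(3/δ)^i⌉₊) ⌈(3/δ)^i⌉₊
            x (f (t jm)) z₁) (add_le_add hT1 hz₁c)
          have hC2 := le_trans (hdist_triangle W (jm * ⌈(3/δ)^i⌉₊ + ⌈(3/δ)^i⌉₊) 1
            x z₁ z₂) (add_le_add hC1 hT3)
          have hC3 := le_trans (hdist_triangle W (jm * ⌈(3/δ)^i⌉₊ + ⌈(3/δ)^i⌉₊ + 1)
            ⌈(3/δ)^i⌉₊ x z₂ (f (t (jp+1)))) (add_le_add hC2 hT4)
          have hC4 := le_trans (hdist_triangle W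
            (jm * ⌈(3/δ)^i⌉₊ + ⌈(3/δ)^i⌉₊ + 1 + ⌈(3/δ)^i⌉₊) ((J - (jp+1)) * ⌈(3/δ)^i⌉₊)
            x (f (t (jp+1))) y) (add_le_add hC3 hT5)
          have hhopB : jm * ⌈(3/δ)^i⌉₊ + ⌈(3/δ)^i⌉₊ + 1 + ⌈(3/δ)^i⌉₊
              + (J - (jp+1)) * ⌈(3/δ)^i⌉₊ ≤ ⌈(3/δ)^(i+1)⌉₊ := by
            refine le_trans ?_ hhop
            have e1 : jm * ⌈(3/δ)^i⌉₊ + ⌈(3/δ)^i⌉₊ + 1 + ⌈(3/δ)^i⌉₊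
                + (J - (jp+1)) * ⌈(3/δ)^i⌉₊
                ≤ jm * ⌈(3/δ)^i⌉₊ + ⌈(3/δ)^i⌉₊ + ⌈(3/δ)^i⌉₊ + ⌈(3/δ)^i⌉₊
                + (J - (jp+1)) * ⌈(3/δ)^i⌉₊ :=
              add_le_add_left (add_le_add_left (add_le_add_right h1h _) _) _
            have e2 : jm * ⌈(3/δ)^i⌉₊ + ⌈(3/δ)^i⌉₊ + ⌈(3/δ)^i⌉₊ + ⌈(3/δ)^i⌉₊
                + (J - (jp+1)) * ⌈(3/δ)^i⌉₊ = (jm + 3 + (J - (jp+1))) * ⌈(3/δ)^i⌉₊ := by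
              ring
            refine le_trans e1 (le_trans (le_of_eq e2) (Nat.mul_le_mul_right _ (by omega)))
          have hwtB : ENNReal.ofReal (1 + 8*δ*(i:ℝ)) * (∑ j ∈ Finset.range jm, c j) + 2*L
              + (2*L + (∑ j ∈ Finset.Ico jm (jp+1), c j) + 2*L) + 2*L
              + ENNReal.ofReal (1 + 8*δ*(i:ℝ)) * (∑ j ∈ Finset.Ico (jp+1) J, c j)
              ≤ ENNReal.ofReal (1 + 8*δ*((i+1:ℕ):ℝ)) * gdist w x y := by
            have hMle : (∑ j ∈ Finset.Ico jm (jp+1), c j)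
                ≤ ENNReal.ofReal (1 + 8*δ*(i:ℝ)) * (∑ j ∈ Finset.Ico jm (jp+1), c j) :=
              le_mul_of_one_le_left (zero_le) hρ1
            have h8L : (8:ℝ≥0∞)*L = ENNReal.ofReal (8*δ) * gdist w x y := by
              rw [← hLD 8 (by norm_num)]
              norm_num
            calc ENNReal.ofReal (1 + 8*δ*(i:ℝ)) * (∑ j ∈ Finset.range jm, c j) + 2*L
                + (2*L + (∑ j ∈ Finset.Ico jm (jp+1), c j) + 2*L) + 2*L
                + ENNReal.ofReal (1 + 8*δ*(i:ℝ)) * (∑ j ∈ Finset.Ico (jp+1) J, c j)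
                = (ENNReal.ofReal (1 + 8*δ*(i:ℝ)) * (∑ j ∈ Finset.range jm, c j)
                  + (∑ j ∈ Finset.Ico jm (jp+1), c j)
                  + ENNReal.ofReal (1 + 8*δ*(i:ℝ)) * (∑ j ∈ Finset.Ico (jp+1) J, c j))
                  + (8:ℝ≥0∞)*L := by ring
              _ ≤ (ENNReal.ofReal (1 + 8*δ*(i:ℝ)) * (∑ j ∈ Finset.range jm, c j)
                  + ENNReal.ofReal (1 + 8*δ*(i:ℝ)) * (∑ j ∈ Finset.Ico jm (jp+1), c j)
                  + ENNReal.ofReal (1 + 8*δ*(i:ℝ)) * (∑ j ∈ Finset.Ico (jp+1) J, c j))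
                  + (8:ℝ≥0∞)*L := by
                  exact add_le_add_left (add_le_add_left (add_le_add_right hMle _) _) _
              _ = ENNReal.ofReal (1 + 8*δ*(i:ℝ)) * ((∑ j ∈ Finset.range jm, c j)
                  + (∑ j ∈ Finset.Ico jm (jp+1), c j) + (∑ j ∈ Finset.Ico (jp+1) J, c j))
                  + (8:ℝ≥0∞)*L := by ring
              _ = ENNReal.ofReal (1 + 8*δ*(i:ℝ)) * gdist w x y
                  + ENNReal.ofReal (8*δ) * gdist w x y := by rw [hPMS, h8L]
              _ = ENNReal.ofReal ((1 + 8*δ*(i:ℝ)) + 8*δ) * gdist w x y := by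
                  rw [← add_mul, ← ENNReal.ofReal_add (by positivity) (by positivity)]
              _ = ENNReal.ofReal (1 + 8*δ*((i+1:ℕ):ℝ)) * gdist w x y := by
                  rw [hcast1]
                  ring_nf
          exact le_trans (hdist_anti W hhopB x y) (le_trans hC4 hwtB)
        · right
          have hCge : ⨅ a ∈ A (i+1+1), gdist w z₁ a ≤ gdist w z₁ z₂ := not_lt.mp hB
          have hzfin : gdist w z₁ z₂ ≠ ⊤ := by
            refine ne_top_of_le_ne_top ?_ hz12
            exact ENNReal.add_ne_top.mpr
              ⟨ENNReal.add_ne_top.mpr ⟨h2Lne, ne_top_of_le_ne_top hd hMD⟩, h2Lne⟩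
          have hne2 : (A (i+1+1)).Nonempty := by
            rcases Finset.eq_empty_or_nonempty (A (i+1+1)) with he | hne
            · rw [he] at hCge
              simp at hCge
              exact absurd hCge hzfin
            · exact hne
          obtain ⟨hpzA, hpzmin⟩ := hp (i+1) z₁ hz₁A hz1top hne2
          have hpzle : gdist w z₁ (p (i+1) z₁) ≤ gdist w z₁ z₂ :=
            le_trans (le_iInf₂ fun a ha => hpzmin a ha) hCge
          have hHz : W z₁ (p (i+1) z₁) ≤ gdist w z₁ (p (i+1) z₁) := by
            refine le_trans (min_le_right _ _) (le_trans (min_le_left _ _) ?_)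
            rw [hH]
            simp only
            rw [if_pos (⟨i+1, hik, hz₁A, hz1top, Or.inr ⟨hne2, rfl⟩⟩ :
              ∃ i' < k, z₁ ∈ A i' ∧ z₁ ∉ A (i'+1) ∧
                ((p (i+1) z₁ ∈ A i' ∧ gdist w z₁ (p (i+1) z₁) < ⨅ a ∈ A (i'+1), gdist w z₁ a) ∨
                  ((A (i'+1)).Nonempty ∧ p (i+1) z₁ = p i' z₁)))]
          have hT3' : hdist W 1 z₁ (p (i+1) z₁)
              ≤ 2*L + (∑ j ∈ Finset.Ico jm (jp+1), c j) + 2*L :=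
            le_trans (hdist_one_le W _ _) (le_trans hHz (le_trans hpzle hz12))
          have hC1 := le_trans (hdist_triangle W (jm * ⌈(3/δ)^i⌉₊) ⌈(3/δ)^i⌉₊
            x (f (t jm)) z₁) (add_le_add hT1 hz₁c)
          have hC2 := le_trans (hdist_triangle W (jm * ⌈(3/δ)^i⌉₊ + ⌈(3/δ)^i⌉₊) 1
            x z₁ (p (i+1) z₁)) (add_le_add hC1 hT3')
          have hhopC : jm * ⌈(3/δ)^i⌉₊ + ⌈(3/δ)^i⌉₊ + 1 ≤ ⌈(3/δ)^(i+1)⌉₊ := by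
            refine le_trans ?_ hhop
            have e1 : jm * ⌈(3/δ)^i⌉₊ + ⌈(3/δ)^i⌉₊ + 1
                ≤ jm * ⌈(3/δ)^i⌉₊ + ⌈(3/δ)^i⌉₊ + ⌈(3/δ)^i⌉₊ := add_le_add_right h1h _
            have e2 : jm * ⌈(3/δ)^i⌉₊ + ⌈(3/δ)^i⌉₊ + ⌈(3/δ)^i⌉₊
                = (jm + 2) * ⌈(3/δ)^i⌉₊ := by ring
            refine le_trans e1 (le_trans (le_of_eq e2) (Nat.mul_le_mul_right _ (by omega)))
          have hwtC : ENNReal.ofReal (1 + 8*δ*(i:ℝ)) * (∑ j ∈ Finset.range jm, c j) + 2*L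
              + (2*L + (∑ j ∈ Finset.Ico jm (jp+1), c j) + 2*L)
              ≤ 2 * gdist w x y := by
            have hMle : (∑ j ∈ Finset.Ico jm (jp+1), c j)
                ≤ ENNReal.ofReal (1 + 8*δ*(i:ℝ)) * (∑ j ∈ Finset.Ico jm (jp+1), c j) :=
              le_mul_of_one_le_left (zero_le) hρ1
            have h6L : (6:ℝ≥0∞)*L = ENNReal.ofReal (6*δ) * gdist w x y := by
              rw [← hLD 6 (by norm_num)]
              norm_num
            calc ENNReal.ofReal (1 + 8*δ*(i:ℝ)) * (∑ j ∈ Finset.range jm, c j) + 2*L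
                + (2*L + (∑ j ∈ Finset.Ico jm (jp+1), c j) + 2*L)
                = (ENNReal.ofReal (1 + 8*δ*(i:ℝ)) * (∑ j ∈ Finset.range jm, c j)
                  + (∑ j ∈ Finset.Ico jm (jp+1), c j)) + (6:ℝ≥0∞)*L := by ring
              _ ≤ (ENNReal.ofReal (1 + 8*δ*(i:ℝ)) * (∑ j ∈ Finset.range jm, c j)
                  + ENNReal.ofReal (1 + 8*δ*(i:ℝ)) * (∑ j ∈ Finset.Ico jm (jp+1), c j))
                  + (6:ℝ≥0∞)*L := add_le_add_left (add_le_add_right hMle _) _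
              _ = ENNReal.ofReal (1 + 8*δ*(i:ℝ)) * ((∑ j ∈ Finset.range jm, c j)
                  + (∑ j ∈ Finset.Ico jm (jp+1), c j)) + (6:ℝ≥0∞)*L := by ring
              _ ≤ ENNReal.ofReal (1 + 8*δ*(i:ℝ)) * gdist w x y
                  + ENNReal.ofReal (6*δ) * gdist w x y := by
                  rw [h6L]
                  exact add_le_add_left (mul_le_mul_right hPreMidD _) _
              _ = ENNReal.ofReal ((1 + 8*δ*(i:ℝ)) + 6*δ) * gdist w x y := by
                  rw [← add_mul, ← ENNReal.ofReal_add (by positivity) (by positivity)]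
              _ ≤ ENNReal.ofReal 2 * gdist w x y :=
                  mul_le_mul_left (ENNReal.ofReal_le_ofReal (by nlinarith)) _
              _ = 2 * gdist w x y := by norm_num
          exact ⟨p (i+1) z₁, hpzA,
            le_trans (hdist_anti W hhopC x (p (i+1) z₁)) (le_trans hC2 hwtC)⟩
  refine ⟨fun x y i hik => hmain i hik x y, fun x y => ?_⟩
  rcases hmain (k-1) (by omega) x y with h | ⟨z, hz, _⟩
  · have hcast : ((k-1:ℕ):ℝ) = (k:ℝ) - 1 := by
      have := Nat.cast_sub hk (R := ℝ)
      simpa using this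
    rwa [hcast] at h
  · rw [show k - 1 + 1 = k by omega, hAk] at hz
    exact absurd hz (Finset.notMem_empty z)
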